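/- Let a < b be integers and d, f : [a, b] → ℝ with 1 + d(t) ≠ 0 for all t ∈ [a, b−1]. Let E(t) := ∏_{r=a}^{t−1} (1 + d(r)) (with E(a) = 1), and L := max_{t ∈ [a,b]} |E(t)| · ∑_{s=a}^{t−1} |E(s+1)|^{−1}. Then for every ε > 0 and every g : ℤ → ℝ with |Δg(t) − d(t) g(t) − f(t)| ≤ ε for all t ∈ [a, b−1], the sequence w defined by w(a) = g(a) and w(t+1) = (1 + d(t)) w(t) + f(t) satisfies |g(t) − w(t)| ≤ L ε for all t ∈ [a, b]. -/

import Mathlib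

open Set

theorem stmt_5 (a b : ℤ) (hab : a < b) (d f : ℤ → ℝ)
    (hd : ∀ t ∈ Icc a (b - 1), 1 + d t ≠ 0)
    (E : ℤ → ℝ) (hE : ∀ t, E t = ∏ r ∈ Finset.Ico a t, (1 + d r))
    (L : ℝ) (hne : (Finset.Icc a b).Nonempty)
    (hL : L = (Finset.Icc a b).sup' hne
      (fun t => |E t| * ∑ s ∈ Finset.Ico a t, |E (s + 1)|⁻¹))
    (ε : ℝ) (hε : 0 < ε) (g w : ℤ → ℝ)
    (happ : ∀ t ∈ Icc a (b - 1), |(g (t + 1) - g t) - d t * g t - f t| ≤ ε)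
    (hwa : w a = g a)
    (hw : ∀ t ∈ Icc a (b - 1), w (t + 1) = (1 + d t) * w t + f t) :
    ∀ t ∈ Icc a b, |g t - w t| ≤ L * ε := by
  have hE0 : ∀ t, a ≤ t → t ≤ b → E t ≠ 0 := by
    intro t hat htb
    rw [hE]
    apply Finset.prod_ne_zero_iff.mpr
    intro r hr
    simp only [Finset.mem_Ico] at hr
    exact hd r ⟨hr.1, by omega⟩
  set S : ℤ → ℝ := fun t => ∑ s ∈ Finset.Ico a t, |E (s + 1)|⁻¹ with hS
  have key : ∀ t, a ≤ t → t ≤ b → |g t - w t| ≤ ε * (|E t| * S t) := by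
    intro t
    refine Int.le_induction (motive := fun t _ => t ≤ b → |g t - w t| ≤ ε * (|E t| * S t)) ?_ ?_ t
    · intro _
      simp [hwa, S, Finset.Ico_self]
    · intro t hat ih htb
      have ht' : t ∈ Icc a (b - 1) := ⟨hat, by omega⟩
      have hEt1 : E (t + 1) = E t * (1 + d t) := by
        have hins : Finset.Ico a (t + 1) = insert t (Finset.Ico a t) := by
          ext x; simp only [Finset.mem_Ico, Finset.mem_insert]; omega
        rw [hE, hE, hins, Finset.prod_insert (by simp), mul_comm]
      have hne1 : E (t + 1) ≠ 0 := hE0 _ (by omega) (by omega)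
      have hd1 : 1 + d t ≠ 0 := hd t ht'
      have hp := happ t ht'
      have heq : g (t + 1) - w (t + 1)
          = (1 + d t) * (g t - w t) + ((g (t + 1) - g t) - d t * g t - f t) := by
        rw [hw t ht']; ring
      have hcancel : |E (t + 1)| * |E (t + 1)|⁻¹ = 1 :=
        mul_inv_cancel₀ (abs_ne_zero.mpr hne1)
      calc |g (t + 1) - w (t + 1)|
          ≤ |1 + d t| * |g t - w t| + ε := by
            rw [heq]
            refine (abs_add_le _ _).trans ?_
            rw [abs_mul]
            gcongr
        _ ≤ |1 + d t| * (ε * (|E t| * S t)) + ε := by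
            gcongr
            exact ih (by omega)
        _ = ε * (|E (t + 1)| * S (t + 1)) := by
            have hsum : S (t + 1) = S t + |E (t + 1)|⁻¹ := by
              simp only [hS]
              have hins : Finset.Ico a (t + 1) = insert t (Finset.Ico a t) := by
                ext x; simp only [Finset.mem_Ico, Finset.mem_insert]; omega
              rw [hins, Finset.sum_insert (by simp), add_comm]
            rw [hsum, hEt1, abs_mul, mul_add]
            have hnz : |1 + d t| * |E t| ≠ 0 :=
              mul_ne_zero (abs_ne_zero.mpr hd1) (abs_ne_zero.mpr (hE0 t hat (by omega)))
            rw [mul_comm (|E t|) (|1 + d t|)]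
            nlinarith [mul_inv_cancel₀ hnz]
  intro t ht
  simp only [Set.mem_Icc] at ht
  have h1 := key t ht.1 ht.2
  have h2 : |E t| * S t ≤ L := by
    rw [hL, hS]
    exact Finset.le_sup' (fun t => |E t| * ∑ s ∈ Finset.Ico a t, |E (s + 1)|⁻¹) (Finset.mem_Icc.mpr ht)
  calc |g t - w t| ≤ ε * (|E t| * S t) := h1
    _ ≤ ε * L := by gcongr
    _ = L * ε := mul_comm _ _
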